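/- Let n, r, l be integers with 0 ≤ l ≤ r < n. Let A ∈ F₂^{(r−l)×n} have full row rank, let B ∈ F₂^{(r−l)×n}, let C ∈ F₂^{l×n} have full row rank, and let S ⊆ F₂^{2n} be the row space of the matrix with rows (A | B) and (0 | C). Assume S is self-orthogonal under the symplectic inner product, dim S = r, and the rows (0 | C) span S ∩ ({0} × F₂ⁿ). For an even integer M ≥ 2, let S′ ⊆ F₂^{2nM} be the row space of the matrix with row blocks (A⊗1_M | B⊗e₁), (0 | C⊗e₁), and (0 | Iₙ⊗W_M). Then S′ is self-orthogonal with S′ ≠ S′^{⊥s}, and the minimum distances satisfy d(S) ≤ d(S′) ≤ M·d(S). -/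

import Mathlib

open Matrix Finset

/-- Symplectic weight of `(x,y) ∈ F₂^ι × F₂^ι`: the number of indices `i` with
`(x_i, y_i) ≠ (0,0)`. -/
def sympWeight {ι : Type*} [Fintype ι] (p : (ι → ZMod 2) × (ι → ZMod 2)) : ℕ :=
  (Finset.univ.filter fun i => p.1 i ≠ 0 ∨ p.2 i ≠ 0).card

/-- Symplectic inner product `⟨(a,b),(c,d)⟩_s = a·d + b·c` over `F₂`. -/
def sympInner {ι : Type*} [Fintype ι] (p q : (ι → ZMod 2) × (ι → ZMod 2)) : ZMod 2 :=
  p.1 ⬝ᵥ q.2 + p.2 ⬝ᵥ q.1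

/-- Symplectic dual `S^{⊥s}` of a subspace `S ⊆ F₂^{2n}`. -/
def sympPerp {ι : Type*} [Fintype ι]
    (S : Submodule (ZMod 2) ((ι → ZMod 2) × (ι → ZMod 2))) :
    Set ((ι → ZMod 2) × (ι → ZMod 2)) :=
  {u | ∀ s ∈ S, sympInner u s = 0}

/-- Minimum distance `d(S) = min { sw(u) : u ∈ S^{⊥s} ∖ S }` of the stabilizer code attached
to a self-orthogonal `S` with `S ≠ S^{⊥s}`. -/
noncomputable def minDistance {ι : Type*} [Fintype ι]
    (S : Submodule (ZMod 2) ((ι → ZMod 2) × (ι → ZMod 2))) : ℕ :=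
  sInf (sympWeight '' (sympPerp S \ (S : Set ((ι → ZMod 2) × (ι → ZMod 2)))))

/-! ### Auxiliary definitions -/

def tens1 {n M : ℕ} (x : Fin n → ZMod 2) : Fin n × Fin M → ZMod 2 := fun p => x p.1
def tensE {n M : ℕ} (y : Fin n → ZMod 2) : Fin n × Fin M → ZMod 2 :=
  fun p => y p.1 * (if (p.2 : ℕ) = 0 then 1 else 0)
def emb {n M : ℕ} (j : Fin n) (v : Fin M → ZMod 2) : Fin n × Fin M → ZMod 2 :=
  fun p => if p.1 = j then v p.2 else 0
def G1 {k n M : ℕ} (A B : Fin k → Fin n → ZMod 2) (i : Fin k) :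
    (Fin n × Fin M → ZMod 2) × (Fin n × Fin M → ZMod 2) := (tens1 (A i), tensE (B i))
def G2 {k n M : ℕ} (C : Fin k → Fin n → ZMod 2) (i : Fin k) :
    (Fin n × Fin M → ZMod 2) × (Fin n × Fin M → ZMod 2) := (0, tensE (C i))
def G3 {n M M' : ℕ} (W : Fin M' → Fin M → ZMod 2) (q : Fin n × Fin M') :
    (Fin n × Fin M → ZMod 2) × (Fin n × Fin M → ZMod 2) := (0, emb q.1 (W q.2))

/-! ### ZMod 2 basics -/

lemma zmod2_cases (c : ZMod 2) : c = 0 ∨ c = 1 := by fin_cases c <;> tauto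

lemma zmod2_add_eq_zero {a b : ZMod 2} (h : a + b = 0) : a = b := by
  rcases zmod2_cases a with ha | ha <;> rcases zmod2_cases b with hb | hb <;> simp_all

lemma zmod2_sum_eq_zero_iff {M : ℕ} (v : Fin M → ZMod 2) :
    (∑ m, v m = 0) ↔ Even (hammingNorm v) := by
  have h1 : ∑ m, v m = ((hammingNorm v : ℕ) : ZMod 2) := by
    unfold hammingNorm
    rw [Finset.card_filter, Nat.cast_sum]
    apply Finset.sum_congr rfl
    intro m _
    rcases zmod2_cases (v m) with h | h <;> simp [h]
  rw [h1, ZMod.natCast_eq_zero_iff, even_iff_two_dvd]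

lemma exists_ne_of_sum_ne {M : ℕ} (v : Fin M → ZMod 2) (h : ∑ m, v m ≠ 0) :
    ∃ m, v m ≠ 0 := by
  by_contra hc
  push_neg at hc
  exact h (Finset.sum_eq_zero fun m _ => hc m)

/-! ### symplectic inner product bilinearity -/

lemma sympInner_comm {ι : Type*} [Fintype ι] (u v : (ι → ZMod 2) × (ι → ZMod 2)) :
    sympInner u v = sympInner v u := by
  simp [sympInner, dotProduct_comm, add_comm]

lemma sympInner_add_right {ι : Type*} [Fintype ι] (u v w : (ι → ZMod 2) × (ι → ZMod 2)) :
    sympInner u (v + w) = sympInner u v + sympInner u w := by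
  simp [sympInner, dotProduct_add, add_dotProduct]; ring

lemma sympInner_smul_right {ι : Type*} [Fintype ι] (c : ZMod 2) (u v : (ι → ZMod 2) × (ι → ZMod 2)) :
    sympInner u (c • v) = c * sympInner u v := by
  simp [sympInner, dotProduct_smul, smul_dotProduct, smul_eq_mul]; ring

lemma sympInner_span_right {ι : Type*} [Fintype ι] {s : Set ((ι → ZMod 2) × (ι → ZMod 2))}
    {u : (ι → ZMod 2) × (ι → ZMod 2)} (h : ∀ v ∈ s, sympInner u v = 0) :
    ∀ v ∈ Submodule.span (ZMod 2) s, sympInner u v = 0 := by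
  intro v hv
  induction hv using Submodule.span_induction with
  | mem x hx => exact h x hx
  | zero => simp [sympInner]
  | add x y _ _ hx hy => rw [sympInner_add_right, hx, hy, add_zero]
  | smul c x _ hx => rw [sympInner_smul_right, hx, mul_zero]

lemma dot_span_zero {M : ℕ} (a : Fin M → ZMod 2) (s : Set (Fin M → ZMod 2))
    (h : ∀ v ∈ s, a ⬝ᵥ v = 0) : ∀ v ∈ Submodule.span (ZMod 2) s, a ⬝ᵥ v = 0 := by
  intro v hv
  induction hv using Submodule.span_induction with
  | mem x hx => exact h x hx
  | zero => simp
  | add x y _ _ hx hy => rw [dotProduct_add, hx, hy, add_zero]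
  | smul c x _ hx => rw [dotProduct_smul, hx, smul_zero]

/-! ### dot product computations -/

lemma sum_ite_val_zero {M : ℕ} [NeZero M] {α : Type*} [AddCommMonoid α] (c : α) :
    (∑ m : Fin M, if (m : ℕ) = 0 then c else 0) = c := by
  have h : ∀ m : Fin M, ((m : ℕ) = 0) = (m = 0) :=
    fun m => propext ⟨fun h => Fin.ext (by simp [h]), fun h => by simp [h]⟩
  simp only [h]
  rw [Finset.sum_ite_eq' univ (0 : Fin M)]
  simp

lemma dot_tens1_tensE {n M : ℕ} [NeZero M] (x y : Fin n → ZMod 2) :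
    (tens1 (M := M) x) ⬝ᵥ (tensE y) = x ⬝ᵥ y := by
  unfold tens1 tensE dotProduct
  rw [Fintype.sum_prod_type]
  apply Finset.sum_congr rfl
  intro j _
  simp only [mul_ite, mul_one, mul_zero]
  exact sum_ite_val_zero _

lemma dot_tensE_tens1 {n M : ℕ} [NeZero M] (x y : Fin n → ZMod 2) :
    (tensE (M := M) y) ⬝ᵥ (tens1 x) = y ⬝ᵥ x := by
  unfold tens1 tensE dotProduct
  rw [Fintype.sum_prod_type]
  apply Finset.sum_congr rfl
  intro j _
  simp only [ite_mul, mul_ite, mul_one, mul_zero, zero_mul, one_mul]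
  exact sum_ite_val_zero _

lemma dot_any_emb {n M : ℕ} (u : Fin n × Fin M → ZMod 2) (j : Fin n) (v : Fin M → ZMod 2) :
    u ⬝ᵥ emb j v = ∑ m, u (j, m) * v m := by
  unfold emb dotProduct
  rw [Fintype.sum_prod_type]
  rw [Finset.sum_comm]
  simp [mul_ite, Finset.sum_ite_eq']

lemma dot_tens1_emb {n M : ℕ} (x : Fin n → ZMod 2) (j : Fin n) (v : Fin M → ZMod 2) :
    (tens1 x) ⬝ᵥ emb j v = x j * ∑ m, v m := by
  rw [dot_any_emb]
  simp [tens1, Finset.mul_sum]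

lemma dot_any_tens1 {n M : ℕ} (u : Fin n × Fin M → ZMod 2) (x : Fin n → ZMod 2) :
    u ⬝ᵥ tens1 x = ∑ j, (∑ m, u (j, m)) * x j := by
  unfold tens1 dotProduct
  rw [Fintype.sum_prod_type]
  simp [Finset.sum_mul]

lemma sum_tensE_row {n M : ℕ} [NeZero M] (y : Fin n → ZMod 2) (j : Fin n) :
    ∑ m, tensE (M := M) y (j, m) = y j := by
  simp only [tensE, mul_ite, mul_one, mul_zero]
  exact sum_ite_val_zero _

/-! ### weight comparisons -/

lemma sympWeight_proj_le {n M : ℕ} [NeZero M]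
    (u' : (Fin n × Fin M → ZMod 2) × (Fin n × Fin M → ZMod 2)) (x y : Fin n → ZMod 2)
    (hx : ∀ p : Fin n × Fin M, u'.1 p = x p.1) (hy : ∀ j, ∑ m, u'.2 (j, m) = y j) :
    sympWeight (x, y) ≤ sympWeight u' := by
  classical
  unfold sympWeight
  apply Finset.card_le_card_of_injOn
    (fun j => if h : ∃ m, u'.2 (j, m) ≠ 0 then (j, h.choose) else (j, (0 : Fin M)))
  · intro j hj
    simp only [Finset.mem_coe, mem_filter, mem_univ, true_and] at hj ⊢
    by_cases h : ∃ m, u'.2 (j, m) ≠ 0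
    · simp only [dif_pos h]
      exact Or.inr h.choose_spec
    · simp only [dif_neg h]
      push_neg at h
      rcases hj with hj | hj
      · exact Or.inl (by rw [hx (j, 0)]; exact hj)
      · exact absurd ((hy j).symm ▸ Finset.sum_eq_zero fun m _ => h m) hj
  · intro a _ b _ hab
    by_cases ha : ∃ m, u'.2 (a, m) ≠ 0 <;> by_cases hb : ∃ m, u'.2 (b, m) ≠ 0 <;>
      simp_all [Prod.ext_iff]

lemma sympWeight_lift_le {n M : ℕ}
    (u' : (Fin n × Fin M → ZMod 2) × (Fin n × Fin M → ZMod 2)) (x y : Fin n → ZMod 2)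
    (hx : ∀ p : Fin n × Fin M, u'.1 p ≠ 0 → x p.1 ≠ 0 ∨ y p.1 ≠ 0)
    (hy : ∀ p : Fin n × Fin M, u'.2 p ≠ 0 → x p.1 ≠ 0 ∨ y p.1 ≠ 0) :
    sympWeight u' ≤ M * sympWeight (x, y) := by
  classical
  unfold sympWeight
  have hsub : (Finset.univ.filter fun p : Fin n × Fin M => u'.1 p ≠ 0 ∨ u'.2 p ≠ 0) ⊆
      (Finset.univ.filter fun j => x j ≠ 0 ∨ y j ≠ 0) ×ˢ Finset.univ := by
    intro p hp
    simp only [mem_filter, mem_univ, true_and, Finset.mem_product] at hp ⊢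
    rcases hp with hp | hp
    · exact ⟨hx p hp, trivial⟩
    · exact ⟨hy p hp, trivial⟩
  calc _ ≤ _ := Finset.card_le_card hsub
    _ = _ := by rw [Finset.card_product]; simp [mul_comm]

/-! ### structure lemmas -/

lemma mem_S'_struct {n rl l' M : ℕ} [NeZero M]
    (A B : Fin rl → Fin n → ZMod 2) (C : Fin l' → Fin n → ZMod 2)
    (W : Fin (M - 1) → Fin M → ZMod 2)
    (hWeven : ∀ k, Even (hammingNorm (W k)))
    (S : Submodule (ZMod 2) ((Fin n → ZMod 2) × (Fin n → ZMod 2)))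
    (hgen1 : ∀ i, (A i, B i) ∈ S) (hgen2 : ∀ i, ((0 : Fin n → ZMod 2), C i) ∈ S)
    {u : (Fin n × Fin M → ZMod 2) × (Fin n × Fin M → ZMod 2)}
    (hu : u ∈ Submodule.span (ZMod 2)
      (Set.range (G1 (M := M) A B) ∪ Set.range (G2 (M := M) C) ∪ Set.range (G3 (n := n) W))) :
    ∃ x y : Fin n → ZMod 2, (x, y) ∈ S ∧ (∀ p : Fin n × Fin M, u.1 p = x p.1) ∧
      (∀ j, ∑ m, u.2 (j, m) = y j) := by
  induction hu using Submodule.span_induction with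
  | mem g hg =>
    rcases hg with (⟨i, rfl⟩ | ⟨i, rfl⟩) | ⟨q, rfl⟩
    · exact ⟨A i, B i, hgen1 i, fun p => rfl, fun j => sum_tensE_row _ _⟩
    · exact ⟨0, C i, hgen2 i, fun p => rfl, fun j => sum_tensE_row _ _⟩
    · refine ⟨0, 0, Submodule.zero_mem S, fun p => rfl, fun j => ?_⟩
      simp only [G3, emb, Pi.zero_apply]
      by_cases h : j = q.1
      · subst h
        simp only [if_pos rfl]
        exact (zmod2_sum_eq_zero_iff _).2 (hWeven q.2)
      · simp [h]
  | zero => exact ⟨0, 0, Submodule.zero_mem S, fun p => rfl, fun j => by simp⟩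
  | add a b _ _ ha hb =>
    obtain ⟨xa, ya, hSa, h1a, h2a⟩ := ha
    obtain ⟨xb, yb, hSb, h1b, h2b⟩ := hb
    refine ⟨xa + xb, ya + yb, Submodule.add_mem S hSa hSb, fun p => ?_, fun j => ?_⟩
    · simp [h1a p, h1b p]
    · simp [Finset.sum_add_distrib, h2a j, h2b j]
  | smul c a _ ha =>
    obtain ⟨xa, ya, hSa, h1a, h2a⟩ := ha
    rcases zmod2_cases c with rfl | rfl
    · exact ⟨0, 0, Submodule.zero_mem S, fun p => by simp, fun j => by simp⟩
    · exact ⟨xa, ya, hSa, fun p => by simpa using h1a p, fun j => by simpa using h2a j⟩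

def liftMap {n M : ℕ} : ((Fin n → ZMod 2) × (Fin n → ZMod 2)) →ₗ[ZMod 2]
    ((Fin n × Fin M → ZMod 2) × (Fin n × Fin M → ZMod 2)) where
  toFun u := (tens1 u.1, tensE u.2)
  map_add' u v := by
    refine Prod.ext ?_ ?_ <;> funext p <;> by_cases h : (p.2 : ℕ) = 0 <;> simp [tens1, tensE, h]
  map_smul' c u := by
    refine Prod.ext ?_ ?_ <;> funext p <;> simp [tens1, tensE] <;> ring

def embMap {n M : ℕ} (j : Fin n) : (Fin M → ZMod 2) →ₗ[ZMod 2]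
    ((Fin n × Fin M → ZMod 2) × (Fin n × Fin M → ZMod 2)) where
  toFun v := (0, emb j v)
  map_add' u v := by
    refine Prod.ext (by simp) ?_
    funext p
    by_cases h : p.1 = j <;> simp [emb, h]
  map_smul' c u := by
    refine Prod.ext (by simp) ?_
    funext p
    by_cases h : p.1 = j <;> simp [emb, h]

lemma lift_mem_S' {n rl l' M M' : ℕ}
    (A B : Fin rl → Fin n → ZMod 2) (C : Fin l' → Fin n → ZMod 2)
    (W : Fin M' → Fin M → ZMod 2) {x y : Fin n → ZMod 2}
    (h : (x, y) ∈ Submodule.span (ZMod 2)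
      (Set.range (fun i => (A i, B i)) ∪ Set.range (fun i => ((0 : Fin n → ZMod 2), C i)))) :
    (tens1 x, tensE y) ∈ Submodule.span (ZMod 2)
      (Set.range (G1 (M := M) A B) ∪ Set.range (G2 (M := M) C) ∪ Set.range (G3 (n := n) W)) := by
  have h2 : liftMap (M := M) (x, y) ∈ Submodule.map (liftMap (M := M))
      (Submodule.span (ZMod 2) (Set.range (fun i => (A i, B i)) ∪
        Set.range (fun i => ((0 : Fin n → ZMod 2), C i)))) :=
    Submodule.mem_map_of_mem h
  rw [Submodule.map_span] at h2
  refine Submodule.span_mono ?_ h2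
  rintro g ⟨g0, (⟨i, rfl⟩ | ⟨i, rfl⟩), rfl⟩
  · exact Or.inl (Or.inl ⟨i, rfl⟩)
  · refine Or.inl (Or.inr ⟨i, ?_⟩)
    refine Prod.ext ?_ rfl
    funext p
    simp [G2, liftMap, tens1]

lemma emb_mem_S' {n rl l' M M' : ℕ}
    (A B : Fin rl → Fin n → ZMod 2) (C : Fin l' → Fin n → ZMod 2)
    (W : Fin M' → Fin M → ZMod 2) (j : Fin n) {v : Fin M → ZMod 2}
    (h : v ∈ Submodule.span (ZMod 2) (Set.range W)) :
    ((0 : Fin n × Fin M → ZMod 2), emb j v) ∈ Submodule.span (ZMod 2)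
      (Set.range (G1 (M := M) A B) ∪ Set.range (G2 (M := M) C) ∪ Set.range (G3 (n := n) W)) := by
  have h2 : embMap (n := n) j v ∈ Submodule.map (embMap (n := n) j)
      (Submodule.span (ZMod 2) (Set.range W)) := Submodule.mem_map_of_mem h
  rw [Submodule.map_span] at h2
  refine Submodule.span_mono ?_ h2
  rintro g ⟨g0, ⟨k, rfl⟩, rfl⟩
  exact Or.inr ⟨(j, k), rfl⟩

lemma evenblocks_mem_S' {n rl l' M M' : ℕ}
    (A B : Fin rl → Fin n → ZMod 2) (C : Fin l' → Fin n → ZMod 2)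
    (W : Fin M' → Fin M → ZMod 2)
    (hW : ∀ v : Fin M → ZMod 2, Even (hammingNorm v) → v ∈ Submodule.span (ZMod 2) (Set.range W))
    (w : Fin n × Fin M → ZMod 2) (hw : ∀ j, Even (hammingNorm (fun m => w (j, m)))) :
    ((0 : Fin n × Fin M → ZMod 2), w) ∈ Submodule.span (ZMod 2)
      (Set.range (G1 (M := M) A B) ∪ Set.range (G2 (M := M) C) ∪ Set.range (G3 (n := n) W)) := by
  have hdecomp : ((0 : Fin n × Fin M → ZMod 2), w) =
      ∑ j : Fin n, ((0 : Fin n × Fin M → ZMod 2), emb j (fun m => w (j, m))) := by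
    refine Prod.ext (by simp [Prod.fst_sum]) ?_
    rw [Prod.snd_sum]
    funext p
    rw [Finset.sum_apply]
    simp only [emb]
    rw [Finset.sum_ite_eq univ p.1 (fun j => w (j, p.2))]
    simp
  rw [hdecomp]
  exact Submodule.sum_mem _ fun j _ => emb_mem_S' A B C W j (hW _ (hw j))

/-- Theorem 10 of the paper. Given a stabilizer code with binary symplectic
generator matrix `[A | B ; 0 | C]` (with `A`, `C` of full row rank, `S` self-orthogonal of
dimension `r`, and the rows `(0|C)` spanning `S ∩ ({0} × F₂ⁿ)`), and even `M ≥ 2`, the code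
`S′` generated by `(A⊗1_M | B⊗e₁)`, `(0 | C⊗e₁)`, and `(0 | Iₙ⊗W_M)` is self-orthogonal with
`S′ ≠ S′^{⊥s}`, and `d(S) ≤ d(S′) ≤ M·d(S)`. -/
theorem product_construction_distance (n r l : ℕ) (hlr : l ≤ r) (hrn : r < n)
    (M : ℕ) (hM : 2 ≤ M) (hMeven : Even M)
    (A B : Fin (r - l) → Fin n → ZMod 2) (C : Fin l → Fin n → ZMod 2)
    (hA : LinearIndependent (ZMod 2) A) (hC : LinearIndependent (ZMod 2) C)
    (S : Submodule (ZMod 2) ((Fin n → ZMod 2) × (Fin n → ZMod 2)))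
    (hS : S = Submodule.span (ZMod 2)
      (Set.range (fun i => (A i, B i)) ∪
       Set.range (fun i => ((0 : Fin n → ZMod 2), C i))))
    (hself : ∀ u ∈ S, ∀ v ∈ S, sympInner u v = 0)
    (hdim : Module.finrank (ZMod 2) S = r)
    (hker : {p | p ∈ S ∧ p.1 = 0}
      = (Submodule.span (ZMod 2)
          (Set.range fun i => ((0 : Fin n → ZMod 2), C i)) :
            Set ((Fin n → ZMod 2) × (Fin n → ZMod 2))))
    (W : Fin (M - 1) → Fin M → ZMod 2)
    (hW : (Submodule.span (ZMod 2) (Set.range W) : Set (Fin M → ZMod 2))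
      = {w | Even (hammingNorm w)})
    (S' : Submodule (ZMod 2) ((Fin n × Fin M → ZMod 2) × (Fin n × Fin M → ZMod 2)))
    (hS' : S' = Submodule.span (ZMod 2)
      (Set.range (fun i => ((fun p : Fin n × Fin M => A i p.1),
          fun p : Fin n × Fin M => B i p.1 * (if (p.2 : ℕ) = 0 then 1 else 0))) ∪
       Set.range (fun i => ((0 : Fin n × Fin M → ZMod 2),
          fun p : Fin n × Fin M => C i p.1 * (if (p.2 : ℕ) = 0 then 1 else 0))) ∪
       Set.range (fun q : Fin n × Fin (M - 1) => ((0 : Fin n × Fin M → ZMod 2),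
          fun p : Fin n × Fin M => if p.1 = q.1 then W q.2 p.2 else 0)))) :
    (∀ u ∈ S', ∀ v ∈ S', sympInner u v = 0) ∧
    (S' : Set ((Fin n × Fin M → ZMod 2) × (Fin n × Fin M → ZMod 2))) ≠ sympPerp S' ∧
    minDistance S ≤ minDistance S' ∧ minDistance S' ≤ M * minDistance S := by
  haveI : NeZero M := ⟨by omega⟩
  -- restate hS' in terms of G1/G2/G3
  have hS'2 : S' = Submodule.span (ZMod 2)
      (Set.range (G1 (M := M) A B) ∪ Set.range (G2 (M := M) C) ∪ Set.range (G3 (n := n) W)) :=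
    hS'
  clear hS'
  -- basic facts about W
  have hWeven : ∀ k, Even (hammingNorm (W k)) := by
    intro k
    have h : W k ∈ (Submodule.span (ZMod 2) (Set.range W) : Set (Fin M → ZMod 2)) :=
      Submodule.subset_span ⟨k, rfl⟩
    rw [hW] at h
    exact h
  have hWsum : ∀ k, ∑ m, W k m = 0 := fun k => (zmod2_sum_eq_zero_iff _).2 (hWeven k)
  have hWspan : ∀ v : Fin M → ZMod 2, Even (hammingNorm v) →
      v ∈ Submodule.span (ZMod 2) (Set.range W) := by
    intro v hv
    rw [← SetLike.mem_coe, hW]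
    exact hv
  -- generators of S and S'
  have hF1 : ∀ i, (A i, B i) ∈ S := fun i => hS ▸ Submodule.subset_span (Or.inl ⟨i, rfl⟩)
  have hF2 : ∀ i, ((0 : Fin n → ZMod 2), C i) ∈ S :=
    fun i => hS ▸ Submodule.subset_span (Or.inr ⟨i, rfl⟩)
  have hG1 : ∀ i, G1 (M := M) A B i ∈ S' :=
    fun i => hS'2 ▸ Submodule.subset_span (Or.inl (Or.inl ⟨i, rfl⟩))
  have hG2 : ∀ i, G2 (M := M) C i ∈ S' :=
    fun i => hS'2 ▸ Submodule.subset_span (Or.inl (Or.inr ⟨i, rfl⟩))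
  have hG3 : ∀ q, G3 (n := n) W q ∈ S' :=
    fun q => hS'2 ▸ Submodule.subset_span (Or.inr ⟨q, rfl⟩)
  -- perp membership from generators
  have hperpS : ∀ u : (Fin n → ZMod 2) × (Fin n → ZMod 2),
      (∀ i, sympInner u (A i, B i) = 0) →
      (∀ i, sympInner u ((0 : Fin n → ZMod 2), C i) = 0) → u ∈ sympPerp S := by
    intro u h1 h2 s hs
    rw [hS] at hs
    refine sympInner_span_right ?_ s hs
    rintro g (⟨i, rfl⟩ | ⟨i, rfl⟩)
    exacts [h1 i, h2 i]
  have hperpS' : ∀ u : (Fin n × Fin M → ZMod 2) × (Fin n × Fin M → ZMod 2),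
      (∀ i, sympInner u (G1 (M := M) A B i) = 0) →
      (∀ i, sympInner u (G2 (M := M) C i) = 0) →
      (∀ q, sympInner u (G3 (n := n) W q) = 0) → u ∈ sympPerp S' := by
    intro u h1 h2 h3 s hs
    rw [hS'2] at hs
    refine sympInner_span_right ?_ s hs
    rintro g ((⟨i, rfl⟩ | ⟨i, rfl⟩) | ⟨q, rfl⟩)
    exacts [h1 i, h2 i, h3 q]
  -- Part 1: self-orthogonality of S'
  have part1 : ∀ u ∈ S', ∀ v ∈ S', sympInner u v = 0 := by
    have hgen : ∀ g ∈ (Set.range (G1 (M := M) A B) ∪ Set.range (G2 (M := M) C) ∪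
        Set.range (G3 (n := n) W)), g ∈ sympPerp S' := by
      rintro g ((⟨i, rfl⟩ | ⟨i, rfl⟩) | ⟨q, rfl⟩) <;>
        refine hperpS' _ (fun i' => ?_) (fun i' => ?_) (fun q' => ?_)
      · show tens1 (A i) ⬝ᵥ tensE (B i') + tensE (B i) ⬝ᵥ tens1 (A i') = 0
        rw [dot_tens1_tensE, dot_tensE_tens1]
        exact hself _ (hF1 i) _ (hF1 i')
      · show tens1 (A i) ⬝ᵥ tensE (C i') + tensE (B i) ⬝ᵥ (0 : Fin n × Fin M → ZMod 2) = 0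
        rw [dot_tens1_tensE, dotProduct_zero, add_zero]
        have := hself _ (hF1 i) _ (hF2 i')
        simpa [sympInner] using this
      · show tens1 (A i) ⬝ᵥ emb q'.1 (W q'.2) + tensE (B i) ⬝ᵥ (0 : Fin n × Fin M → ZMod 2) = 0
        rw [dot_tens1_emb, hWsum, dotProduct_zero, mul_zero, add_zero]
      · show (0 : Fin n × Fin M → ZMod 2) ⬝ᵥ tensE (B i') + tensE (C i) ⬝ᵥ tens1 (A i') = 0
        rw [zero_dotProduct, dot_tensE_tens1, zero_add]
        have := hself _ (hF2 i) _ (hF1 i')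
        simpa [sympInner] using this
      · simp [sympInner, G2]
      · simp [sympInner, G2, G3]
      · show (0 : Fin n × Fin M → ZMod 2) ⬝ᵥ tensE (B i') + emb q.1 (W q.2) ⬝ᵥ tens1 (A i') = 0
        rw [zero_dotProduct, zero_add, dotProduct_comm, dot_tens1_emb, hWsum, mul_zero]
      · simp [sympInner, G2, G3]
      · simp [sympInner, G3]
    intro u hu v hv
    rw [sympInner_comm]
    rw [hS'2] at hu
    refine sympInner_span_right ?_ u hu
    intro g hg
    rw [sympInner_comm]
    exact hgen g hg v hv
  -- existence of y₀ ∈ ker A \ span C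
  obtain ⟨y₀, hy₀ker, hy₀C⟩ : ∃ y₀ : Fin n → ZMod 2, (∀ i, A i ⬝ᵥ y₀ = 0) ∧
      y₀ ∉ Submodule.span (ZMod 2) (Set.range C) := by
    set φ := Matrix.mulVecLin (Matrix.of A) with hφ
    have hle : Submodule.span (ZMod 2) (Set.range C) ≤ LinearMap.ker φ := by
      rw [Submodule.span_le]
      rintro v ⟨i, rfl⟩
      simp only [SetLike.mem_coe, LinearMap.mem_ker]
      funext i'
      have := hself _ (hF1 i') _ (hF2 i)
      simpa [sympInner, hφ, Matrix.mulVecLin, Matrix.mulVec, dotProduct] using this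
    have hkerrank : n - (r - l) ≤ Module.finrank (ZMod 2) (LinearMap.ker φ) := by
      have h1 := LinearMap.finrank_range_add_finrank_ker φ
      have h2 : Module.finrank (ZMod 2) (LinearMap.range φ) ≤ r - l := by
        calc Module.finrank (ZMod 2) (LinearMap.range φ)
            ≤ Module.finrank (ZMod 2) (Fin (r - l) → ZMod 2) := Submodule.finrank_le _
          _ = r - l := by simp
      have h3 : Module.finrank (ZMod 2) (Fin n → ZMod 2) = n := by simp
      omega
    have hCrank : Module.finrank (ZMod 2) (Submodule.span (ZMod 2) (Set.range C)) = l := by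
      rw [finrank_span_eq_card hC]
      simp
    have hlt : Submodule.span (ZMod 2) (Set.range C) < LinearMap.ker φ := by
      refine hle.lt_of_ne ?_
      intro heq
      rw [← heq] at hkerrank
      omega
    obtain ⟨y₀, hy₀mem, hy₀not⟩ := SetLike.exists_of_lt hlt
    refine ⟨y₀, ?_, hy₀not⟩
    intro i
    have := LinearMap.mem_ker.1 hy₀mem
    have := congrFun this i
    simpa [hφ, Matrix.mulVecLin, Matrix.mulVec, dotProduct] using this
  -- (0, y₀) ∉ S
  have hu₀notS : ((0 : Fin n → ZMod 2), y₀) ∉ S := by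
    intro hmem
    have h1 : ((0 : Fin n → ZMod 2), y₀) ∈ {p : (Fin n → ZMod 2) × (Fin n → ZMod 2) |
        p ∈ S ∧ p.1 = 0} := ⟨hmem, rfl⟩
    rw [hker] at h1
    have h2 : y₀ ∈ Submodule.map (LinearMap.snd (ZMod 2) (Fin n → ZMod 2) (Fin n → ZMod 2))
        (Submodule.span (ZMod 2) (Set.range fun i => ((0 : Fin n → ZMod 2), C i))) :=
      ⟨((0 : Fin n → ZMod 2), y₀), h1, rfl⟩
    rw [Submodule.map_span] at h2
    have him : (LinearMap.snd (ZMod 2) (Fin n → ZMod 2) (Fin n → ZMod 2)) ''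
        (Set.range fun i => ((0 : Fin n → ZMod 2), C i)) = Set.range C := by
      ext v
      constructor
      · rintro ⟨g, ⟨i, rfl⟩, rfl⟩; exact ⟨i, rfl⟩
      · rintro ⟨i, rfl⟩; exact ⟨((0 : Fin n → ZMod 2), C i), ⟨i, rfl⟩, rfl⟩
    rw [him] at h2
    exact hy₀C h2
  -- (0, y₀) ∈ sympPerp S
  have hu₀perp : ((0 : Fin n → ZMod 2), y₀) ∈ sympPerp S := by
    refine hperpS _ (fun i => ?_) (fun i => ?_)
    · show (0 : Fin n → ZMod 2) ⬝ᵥ B i + y₀ ⬝ᵥ A i = 0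
      rw [zero_dotProduct, zero_add, dotProduct_comm]
      exact hy₀ker i
    · simp [sympInner]
  -- the lifted witness (0, tensE y₀)
  have hu₀'perp : ((0 : Fin n × Fin M → ZMod 2), tensE y₀) ∈ sympPerp S' := by
    refine hperpS' _ (fun i => ?_) (fun i => ?_) (fun q => ?_)
    · show (0 : Fin n × Fin M → ZMod 2) ⬝ᵥ tensE (B i) + tensE y₀ ⬝ᵥ tens1 (A i) = 0
      rw [zero_dotProduct, zero_add, dot_tensE_tens1, dotProduct_comm]
      exact hy₀ker i
    · simp [sympInner, G2]
    · simp [sympInner, G3]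
  have hu₀'notS' : ((0 : Fin n × Fin M → ZMod 2), tensE y₀) ∉ S' := by
    intro hmem
    rw [hS'2] at hmem
    obtain ⟨x₀, y₀', hS0, h1, h2⟩ := mem_S'_struct A B C W hWeven S hF1 hF2 hmem
    have hx0 : x₀ = 0 := by
      funext j
      exact (h1 ((j, 0) : Fin n × Fin M)).symm
    have hy0 : y₀' = y₀ := by
      funext j
      rw [← h2 j, sum_tensE_row]
    rw [hx0, hy0] at hS0
    exact hu₀notS hS0
  -- nonemptiness of the distance sets
  have hTne : (sympWeight '' (sympPerp S \
      (S : Set ((Fin n → ZMod 2) × (Fin n → ZMod 2))))).Nonempty :=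
    ⟨_, ⟨((0 : Fin n → ZMod 2), y₀), ⟨hu₀perp, hu₀notS⟩, rfl⟩⟩
  have hT'ne : (sympWeight '' (sympPerp S' \
      (S' : Set ((Fin n × Fin M → ZMod 2) × (Fin n × Fin M → ZMod 2))))).Nonempty :=
    ⟨_, ⟨((0 : Fin n × Fin M → ZMod 2), tensE (M := M) y₀), ⟨hu₀'perp, hu₀'notS'⟩, rfl⟩⟩
  refine ⟨part1, ?_, ?_, ?_⟩
  · -- S' ≠ perp S'
    intro h
    have hmem : ((0 : Fin n × Fin M → ZMod 2), tensE (M := M) y₀) ∈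
        (S' : Set ((Fin n × Fin M → ZMod 2) × (Fin n × Fin M → ZMod 2))) := by
      rw [h]; exact hu₀'perp
    exact hu₀'notS' hmem
  · -- d(S) ≤ d(S')
    obtain ⟨u', ⟨hu'p, hu'n⟩, hu'w⟩ := Nat.sInf_mem hT'ne
    -- constancy of u'.1 on blocks
    have hg3 : ∀ (j : Fin n) (k : Fin (M - 1)), (fun m => u'.1 (j, m)) ⬝ᵥ W k = 0 := by
      intro j k
      have h := hu'p _ (hG3 (j, k))
      show ∑ m, u'.1 (j, m) * W k m = 0
      rw [← dot_any_emb]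
      have h2 : u'.1 ⬝ᵥ emb j (W k) + u'.2 ⬝ᵥ (0 : Fin n × Fin M → ZMod 2) = 0 := h
      rwa [dotProduct_zero, add_zero] at h2
    have hspanW : ∀ (j : Fin n), ∀ v ∈ Submodule.span (ZMod 2) (Set.range W),
        (fun m => u'.1 (j, m)) ⬝ᵥ v = 0 := by
      intro j
      apply dot_span_zero
      rintro v ⟨k, rfl⟩
      exact hg3 j k
    have hconst : ∀ p : Fin n × Fin M, u'.1 p = u'.1 (p.1, 0) := by
      intro p
      set v : Fin M → ZMod 2 :=
        fun m' => (if m' = p.2 then (1 : ZMod 2) else 0) + (if m' = 0 then 1 else 0) with hv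
      have hvmem : v ∈ Submodule.span (ZMod 2) (Set.range W) := by
        apply hWspan
        rw [← zmod2_sum_eq_zero_iff]
        rw [hv]
        rw [Finset.sum_add_distrib, Finset.sum_ite_eq' univ p.2 (fun _ => (1 : ZMod 2)),
          Finset.sum_ite_eq' univ (0 : Fin M) (fun _ => (1 : ZMod 2))]
        simp
        decide
      have h := hspanW p.1 v hvmem
      have h2 : (fun m => u'.1 (p.1, m)) ⬝ᵥ v = u'.1 (p.1, p.2) + u'.1 (p.1, 0) := by
        unfold dotProduct
        rw [hv]
        simp only [mul_add, mul_ite, mul_one, mul_zero]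
        rw [Finset.sum_add_distrib, Finset.sum_ite_eq' univ p.2, Finset.sum_ite_eq' univ (0 : Fin M)]
        simp
      rw [h2] at h
      exact zmod2_add_eq_zero h
    set x : Fin n → ZMod 2 := fun j => u'.1 (j, 0) with hxdef
    set y : Fin n → ZMod 2 := fun j => ∑ m, u'.2 (j, m) with hydef
    have hu'1 : u'.1 = tens1 x := funext fun p => hconst p
    have hxyperp : ((x, y) : (Fin n → ZMod 2) × (Fin n → ZMod 2)) ∈ sympPerp S := by
      refine hperpS _ (fun i => ?_) (fun i => ?_)
      · show x ⬝ᵥ B i + y ⬝ᵥ A i = 0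
        have h := hu'p _ (hG1 i)
        have h2 : u'.1 ⬝ᵥ tensE (B i) + u'.2 ⬝ᵥ tens1 (A i) = 0 := h
        rw [hu'1, dot_tens1_tensE, dot_any_tens1] at h2
        exact h2
      · show x ⬝ᵥ C i + y ⬝ᵥ (0 : Fin n → ZMod 2) = 0
        have h := hu'p _ (hG2 i)
        have h2 : u'.1 ⬝ᵥ tensE (C i) + u'.2 ⬝ᵥ (0 : Fin n × Fin M → ZMod 2) = 0 := h
        rw [hu'1, dot_tens1_tensE, dotProduct_zero] at h2
        rwa [dotProduct_zero]
    have hxynotS : ((x, y) : (Fin n → ZMod 2) × (Fin n → ZMod 2)) ∉ S := by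
      intro hmem
      apply hu'n
      rw [hS] at hmem
      have hlift := lift_mem_S' A B C W hmem
      set w : Fin n × Fin M → ZMod 2 := u'.2 - tensE y with hwdef
      have hblocks : ∀ j, Even (hammingNorm (fun m => w (j, m))) := by
        intro j
        rw [← zmod2_sum_eq_zero_iff]
        have hwm : ∀ m : Fin M, w (j, m) = u'.2 (j, m) - tensE (M := M) y (j, m) :=
          fun m => rfl
        simp only [hwm]
        rw [Finset.sum_sub_distrib, sum_tensE_row]
        simp [hydef]
      have hdiffmem := evenblocks_mem_S' A B C W hWspan w hblocks
      have hsum := Submodule.add_mem _ hlift hdiffmem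
      have heq : (tens1 (M := M) x, tensE y) + ((0 : Fin n × Fin M → ZMod 2), w)
          = u' := by
        refine Prod.ext ?_ ?_
        · show tens1 x + 0 = u'.1
          rw [add_zero, hu'1]
        · show tensE y + w = u'.2
          rw [hwdef]
          ring
      rw [heq] at hsum
      rw [hS'2]
      exact hsum
    have hwle : sympWeight ((x, y) : (Fin n → ZMod 2) × (Fin n → ZMod 2)) ≤ sympWeight u' :=
      sympWeight_proj_le u' x y (fun p => hconst p) (fun j => rfl)
    calc minDistance S ≤ sympWeight ((x, y) : (Fin n → ZMod 2) × (Fin n → ZMod 2)) :=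
          Nat.sInf_le ⟨(x, y), ⟨hxyperp, hxynotS⟩, rfl⟩
      _ ≤ sympWeight u' := hwle
      _ = minDistance S' := hu'w
  · -- d(S') ≤ M * d(S)
    obtain ⟨u, ⟨hup, hun⟩, huw⟩ := Nat.sInf_mem hTne
    set u' : (Fin n × Fin M → ZMod 2) × (Fin n × Fin M → ZMod 2) :=
      (tens1 u.1, tensE u.2) with hu'def
    have hu'perp : u' ∈ sympPerp S' := by
      refine hperpS' _ (fun i => ?_) (fun i => ?_) (fun q => ?_)
      · show tens1 u.1 ⬝ᵥ tensE (B i) + tensE u.2 ⬝ᵥ tens1 (A i) = 0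
        rw [dot_tens1_tensE, dot_tensE_tens1]
        exact hup _ (hF1 i)
      · show tens1 u.1 ⬝ᵥ tensE (C i) + tensE u.2 ⬝ᵥ (0 : Fin n × Fin M → ZMod 2) = 0
        rw [dot_tens1_tensE, dotProduct_zero, add_zero]
        have h := hup _ (hF2 i)
        simpa [sympInner] using h
      · show tens1 u.1 ⬝ᵥ emb q.1 (W q.2) + tensE u.2 ⬝ᵥ (0 : Fin n × Fin M → ZMod 2) = 0
        rw [dot_tens1_emb, hWsum, dotProduct_zero, mul_zero, add_zero]
    have hu'notS' : u' ∉ S' := by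
      intro hmem
      rw [hS'2] at hmem
      obtain ⟨x₀, y₀', hS0, h1, h2⟩ := mem_S'_struct A B C W hWeven S hF1 hF2 hmem
      have hx0 : x₀ = u.1 := by
        funext j
        exact (h1 ((j, 0) : Fin n × Fin M)).symm
      have hy0 : y₀' = u.2 := by
        funext j
        rw [← h2 j]
        exact (sum_tensE_row u.2 j)
      rw [hx0, hy0] at hS0
      exact hun hS0
    have hwle : sympWeight u' ≤ M * sympWeight (u.1, u.2) := by
      refine sympWeight_lift_le u' u.1 u.2 (fun p hp => Or.inl hp) (fun p hp => Or.inr ?_)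
      intro h0
      apply hp
      show u.2 p.1 * (if ((p.2 : Fin M) : ℕ) = 0 then (1 : ZMod 2) else 0) = 0
      rw [h0, zero_mul]
    calc minDistance S' ≤ sympWeight u' := Nat.sInf_le ⟨u', ⟨hu'perp, hu'notS'⟩, rfl⟩
      _ ≤ M * sympWeight (u.1, u.2) := hwle
      _ = M * minDistance S := congrArg (HMul.hMul M) huw
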